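/- Define *L_0 = *L and *L_n = {*L_{n-1}, ..., *L_1, *L_0} for n ≥ 1. If G = {*L_{a_1}, ..., *L_{a_ℓ}} and a = mex{a_1, ..., a_ℓ}, then G ≡ *L_a, i.e. o(G + X) = o(*L_a + X) for every position X. -/

import Mathlib

/-- Positions of LR-ending partisan games: two terminals and finite option sets
(represented as lists; set-like behavior is captured by the `Iso` relation). -/
inductive Pos : Type
  | termL : Pos
  | termR : Pos
  | opts : List Pos → Pos

namespace Pos

/-- Valid positions: every non-terminal position has a nonempty set of options. -/
inductive Valid : Pos → Prop
  | termL : Valid termL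
  | termR : Valid termR
  | opts : ∀ gs : List Pos, gs ≠ [] → (∀ g ∈ gs, Valid g) → Valid (opts gs)

/-- Disjunctive sum. -/
def sum : Pos → Pos → Pos
  | termL, termL => termL
  | termL, termR => termR
  | termR, termL => termR
  | termR, termR => termL
  | termL, opts hs => opts (hs.attach.map (fun h => sum termL h.1))
  | termR, opts hs => opts (hs.attach.map (fun h => sum termR h.1))
  | opts gs, termL => opts (gs.attach.map (fun g => sum g.1 termL))
  | opts gs, termR => opts (gs.attach.map (fun g => sum g.1 termR))
  | opts gs, opts hs =>
      opts (gs.attach.map (fun g => sum g.1 (opts hs)) ++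
            hs.attach.map (fun h => sum (opts gs) h.1))
termination_by g h => sizeOf g + sizeOf h
decreasing_by
  all_goals
    first
      | (have := List.sizeOf_lt_of_mem h.2; simp_all; omega)
      | (have := List.sizeOf_lt_of_mem g.2; simp_all; omega)

/-- Conjugate: swap the two kinds of terminal positions. -/
def conj : Pos → Pos
  | termL => termR
  | termR => termL
  | opts gs => opts (gs.attach.map (fun g => conj g.1))
decreasing_by
  have := List.sizeOf_lt_of_mem g.2; simp_all; omega

/-- Isomorphism of game trees (positions viewed as sets of options). -/
def Iso : Pos → Pos → Prop
  | termL, termL => True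
  | termR, termR => True
  | opts gs, opts hs =>
      (∀ g ∈ gs.attach, ∃ h ∈ hs.attach, Iso g.1 h.1) ∧
      (∀ h ∈ hs.attach, ∃ g ∈ gs.attach, Iso g.1 h.1)
  | _, _ => False
termination_by g h => sizeOf g + sizeOf h
decreasing_by
  all_goals
    (have hg := List.sizeOf_lt_of_mem g.2; have hh := List.sizeOf_lt_of_mem h.2;
     simp_all; omega)

inductive Player : Type
  | left : Player
  | right : Player
  deriving DecidableEq

/-- `Wins p b G` : player `p` has a winning strategy from position `G`,
where `b = true` means it is `p`'s turn to move and `b = false` means the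
opponent is to move.  A terminal position is won by the player given by
its label, regardless of whose turn it is. -/
inductive Wins : Player → Bool → Pos → Prop
  | termL : ∀ b, Wins Player.left b termL
  | termR : ∀ b, Wins Player.right b termR
  | move : ∀ (p : Player) (gs : List Pos) (g : Pos), g ∈ gs →
      Wins p false g → Wins p true (opts gs)
  | wait : ∀ (p : Player) (gs : List Pos),
      (∀ g, g ∈ gs → Wins p true g) → Wins p false (opts gs)

inductive Outcome : Type
  | L : Outcome
  | R : Outcome
  | N : Outcome
  | P : Outcome
  deriving DecidableEq

/-- The outcome of a position. -/
noncomputable def outcome (G : Pos) : Outcome := by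
  classical
  exact
    if Wins Player.left true G then
      if Wins Player.left false G then Outcome.L else Outcome.N
    else
      if Wins Player.left false G then Outcome.P else Outcome.R

/-- Equivalence of positions: the outcome agrees in every (valid) context. -/
def equiv (G H : Pos) : Prop :=
  ∀ X : Pos, Valid X → outcome (sum G X) = outcome (sum H X)

end Pos
namespace Pos

mutual
/-- `Ln n` is the position `*L_n`: `*L_0 = *L`, `*L_n = {*L_{n-1}, ..., *L_0}`. -/
def Ln : ℕ → Pos
  | 0 => termL
  | n + 1 => opts (LnList (n + 1))
termination_by n => 2 * n + 1
/-- `LnList n = [*L_{n-1}, ..., *L_0]`. -/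
def LnList : ℕ → List Pos
  | 0 => []
  | n + 1 => Ln n :: LnList n
termination_by n => 2 * n
end

mutual
/-- `Rn n` is the position `*R_n`. -/
def Rn : ℕ → Pos
  | 0 => termR
  | n + 1 => opts (RnList (n + 1))
termination_by n => 2 * n + 1
def RnList : ℕ → List Pos
  | 0 => []
  | n + 1 => Rn n :: RnList n
termination_by n => 2 * n
end

/-- `kome n` is `✠_n = {*L_{n-1}, *R_{n-1}, ..., *L_0, *R_0}` (for `n ≥ 1`). -/
def kome (n : ℕ) : Pos := opts (LnList n ++ RnList n)

mutual
/-- `starAux n` represents `★(n+1)`: `★1 = {*L, *R}`, `★n = {★(n-1),...,★1,*L,*R}`. -/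
def starAux : ℕ → Pos
  | 0 => opts [termL, termR]
  | n + 1 => opts (starList (n + 1) ++ [termL, termR])
termination_by n => 2 * n + 1
/-- `starList n = [★n, ..., ★1]`. -/
def starList : ℕ → List Pos
  | 0 => []
  | n + 1 => starAux n :: starList n
termination_by n => 2 * n
end

/-- `bigstar n` is `★n` (meaningful for `n ≥ 1`). -/
def bigstar (n : ℕ) : Pos := starAux (n - 1)

/-- Sum of a list of positions (`*L` is the empty sum, and `G + *L = G`). -/
def sumList (l : List Pos) : Pos := l.foldr sum termL

/-- Nim-sum (XOR) of a list of naturals. -/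
def xorList (l : List ℕ) : ℕ := l.foldr (· ^^^ ·) 0

/-- Minimum excludant of a list of naturals. -/
noncomputable def mexList (l : List ℕ) : ℕ := sInf {n : ℕ | n ∉ l}

end Pos
namespace Pos

lemma sum_opts (gs : List Pos) (X : Pos) :
    sum (opts gs) X = opts (
      (gs.map (fun g => sum g X)) ++
      (match X with
       | opts hs => hs.map (fun h => sum (opts gs) h)
       | _ => [])) := by
  cases X <;> simp [sum, List.attach, List.attachWith, List.map_pmap]

lemma wins_termL (p b) : Wins p b termL ↔ p = Player.left := by
  constructor
  · intro h; cases h; rfl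
  · rintro rfl; exact Wins.termL b

lemma wins_termR (p b) : Wins p b termR ↔ p = Player.right := by
  constructor
  · intro h; cases h; rfl
  · rintro rfl; exact Wins.termR b

lemma wins_true_opts (p gs) : Wins p true (opts gs) ↔ ∃ g ∈ gs, Wins p false g := by
  constructor
  · intro h; cases h with
    | move _ _ g hg hw => exact ⟨g, hg, hw⟩
  · rintro ⟨g, hg, hw⟩; exact Wins.move p gs g hg hw

lemma wins_false_opts (p gs) : Wins p false (opts gs) ↔ ∀ g ∈ gs, Wins p true g := by
  constructor
  · intro h; cases h with
    | wait _ _ hw => exact hw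
  · exact Wins.wait p gs

end Pos
namespace Pos

theorem posInd (motive : Pos → Prop) (hL : motive termL) (hR : motive termR)
    (ho : ∀ gs, (∀ g ∈ gs, motive g) → motive (opts gs)) : ∀ X, motive X
  | .termL => hL
  | .termR => hR
  | .opts gs => ho gs (fun g hg => posInd motive hL hR ho g)
termination_by X => sizeOf X
decreasing_by have := List.sizeOf_lt_of_mem hg; simp_all; omega

lemma sum_termL_left (X : Pos) : sum termL X = X := by
  induction X using posInd with
  | hL => simp [sum]
  | hR => simp [sum]
  | ho hs ih =>
      simp only [sum, List.attach, List.attachWith, List.map_pmap]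
      congr 1
      rw [show (List.pmap (fun a (_ : a ∈ hs) => sum termL a) hs (fun _ h => h)) = List.pmap (fun a (_ : a ∈ hs) => a) hs (fun _ h => h) from List.pmap_congr_left hs (fun h hh _ _ => ih h hh)]
      simp

lemma mem_LnList {g : Pos} {n : ℕ} : g ∈ LnList n ↔ ∃ j < n, g = Ln j := by
  induction n with
  | zero => simp [LnList]
  | succ n ih =>
      rw [LnList]
      simp only [List.mem_cons, ih]
      constructor
      · rintro (rfl | ⟨j, hj, rfl⟩)
        · exact ⟨n, Nat.lt_succ_self n, rfl⟩
        · exact ⟨j, hj.trans (Nat.lt_succ_self n), rfl⟩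
      · rintro ⟨j, hj, rfl⟩
        rcases Nat.lt_succ_iff_lt_or_eq.mp hj with h | rfl
        · exact Or.inr ⟨j, h, rfl⟩
        · exact Or.inl rfl

lemma Ln_zero : Ln 0 = termL := by rw [Ln]

lemma Ln_succ (n : ℕ) : Ln (n+1) = opts (LnList (n+1)) := by rw [Ln]

end Pos
namespace Pos

lemma wins_true_sum_opts (p : Player) (gs : List Pos) (X : Pos) :
    Wins p true (sum (opts gs) X) ↔ (∃ g ∈ gs, Wins p false (sum g X)) ∨
      (∃ hs, X = opts hs ∧ ∃ h ∈ hs, Wins p false (sum (opts gs) h)) := by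
  rw [sum_opts, wins_true_opts]
  cases X <;> simp <;> aesop

lemma wins_false_sum_opts (p : Player) (gs : List Pos) (X : Pos) :
    Wins p false (sum (opts gs) X) ↔ (∀ g ∈ gs, Wins p true (sum g X)) ∧
      (∀ hs, X = opts hs → ∀ h ∈ hs, Wins p true (sum (opts gs) h)) := by
  rw [sum_opts, wins_false_opts]
  cases X <;> simp <;> aesop

end Pos
namespace Pos

lemma Ln_mem_self (n : ℕ) : Ln n ∈ LnList (n+1) := mem_LnList.mpr ⟨n, Nat.lt_succ_self n, rfl⟩

lemma wins_Ln_termL (k : ℕ) : ∀ b, Wins Player.left b (sum (Ln k) termL) := by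
  induction k using Nat.strong_induction_on with
  | _ k ih =>
    intro b
    cases k with
    | zero => simpa [Ln, sum] using Wins.termL b
    | succ n =>
      rw [Ln_succ]
      cases b
      · rw [wins_false_sum_opts]
        refine ⟨?_, by simp⟩
        intro g hg; rcases mem_LnList.mp hg with ⟨j, hj, rfl⟩; exact ih j hj true
      · exact (wins_true_sum_opts _ _ _).mpr
          (Or.inl ⟨Ln n, Ln_mem_self n, ih n (Nat.lt_succ_self n) false⟩)

lemma wins_Ln_termR (k : ℕ) : ∀ b, Wins Player.right b (sum (Ln k) termR) := by
  induction k using Nat.strong_induction_on with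
  | _ k ih =>
    intro b
    cases k with
    | zero => simpa [Ln, sum] using Wins.termR b
    | succ n =>
      rw [Ln_succ]
      cases b
      · rw [wins_false_sum_opts]
        refine ⟨?_, by simp⟩
        intro g hg; rcases mem_LnList.mp hg with ⟨j, hj, rfl⟩; exact ih j hj true
      · exact (wins_true_sum_opts _ _ _).mpr
          (Or.inl ⟨Ln n, Ln_mem_self n, ih n (Nat.lt_succ_self n) false⟩)

lemma not_wins_Ln_termL (k : ℕ) : ∀ b, ¬ Wins Player.right b (sum (Ln k) termL) := by
  induction k using Nat.strong_induction_on with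
  | _ k ih =>
    intro b
    cases k with
    | zero => simp [Ln, sum, wins_termL]
    | succ n =>
      rw [Ln_succ]
      cases b
      · rw [wins_false_sum_opts]
        rintro ⟨h1, -⟩
        exact ih n (Nat.lt_succ_self n) true (h1 (Ln n) (Ln_mem_self n))
      · rw [wins_true_sum_opts]
        rintro (⟨g, hg, hw⟩ | ⟨hs, habs, -⟩)
        · rcases mem_LnList.mp hg with ⟨j, hj, rfl⟩; exact ih j hj false hw
        · exact Pos.noConfusion habs

lemma not_wins_Ln_termR (k : ℕ) : ∀ b, ¬ Wins Player.left b (sum (Ln k) termR) := by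
  induction k using Nat.strong_induction_on with
  | _ k ih =>
    intro b
    cases k with
    | zero => simp [Ln, sum, wins_termR]
    | succ n =>
      rw [Ln_succ]
      cases b
      · rw [wins_false_sum_opts]
        rintro ⟨h1, -⟩
        exact ih n (Nat.lt_succ_self n) true (h1 (Ln n) (Ln_mem_self n))
      · rw [wins_true_sum_opts]
        rintro (⟨g, hg, hw⟩ | ⟨hs, habs, -⟩)
        · rcases mem_LnList.mp hg with ⟨j, hj, rfl⟩; exact ih j hj false hw
        · exact Pos.noConfusion habs

lemma mexList_not_mem (as : List ℕ) : mexList as ∉ as := by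
  have hne : {n : ℕ | n ∉ as}.Nonempty := (List.finite_toSet as).infinite_compl.nonempty
  exact Nat.sInf_mem hne

lemma mexList_lt_mem {as : List ℕ} {j : ℕ} (hj : j < mexList as) : j ∈ as :=
  not_not.mp (Nat.notMem_of_lt_sInf hj)

end Pos
namespace Pos

lemma main_lemma (as : List ℕ) (has : as ≠ []) : ∀ (X : Pos) (p : Player) (b : Bool),
    Wins p b (sum (opts (as.map Ln)) X) ↔ Wins p b (sum (Ln (mexList as)) X) := by
  intro X
  induction X using posInd with
  | ho hs IH =>
    intro p b
    constructor
    · -- forward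
      intro hw
      cases b with
      | true =>
        rw [wins_true_sum_opts] at hw
        rcases hw with ⟨g, hg, hwg⟩ | ⟨hs', heq, h, hh, hwh⟩
        · rcases List.mem_map.mp hg with ⟨i, hias, rfl⟩
          have hine : i ≠ mexList as := fun h => mexList_not_mem as (h ▸ hias)
          rcases Nat.lt_or_ge i (mexList as) with hilt | hige
          · -- i < a : same move available
            obtain ⟨m, hm⟩ : ∃ m, mexList as = m + 1 := ⟨mexList as - 1, by omega⟩
            rw [hm, Ln_succ, wins_true_sum_opts]
            exact Or.inl ⟨Ln i, mem_LnList.mpr ⟨i, by omega, rfl⟩, hwg⟩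
          · -- i > a : reversible
            have higt : mexList as < i := lt_of_le_of_ne hige (Ne.symm hine)
            obtain ⟨k, rfl⟩ : ∃ k, i = k + 1 := ⟨i - 1, by omega⟩
            rw [Ln_succ, wins_false_sum_opts] at hwg
            exact hwg.1 (Ln (mexList as)) (mem_LnList.mpr ⟨mexList as, by omega, rfl⟩)
        · -- move in X
          cases heq
          have hwh' := (IH h hh p false).mp hwh
          cases hA : mexList as with
          | zero =>
            rw [hA] at hwh'
            rw [Ln_zero, sum_termL_left] at hwh' ⊢
            exact Wins.move p hs h hh hwh'
          | succ m =>
            rw [hA, Ln_succ] at hwh'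
            rw [Ln_succ, wins_true_sum_opts]
            exact Or.inr ⟨hs, rfl, h, hh, hwh'⟩
      | false =>
        rw [wins_false_sum_opts] at hw
        cases hA : mexList as with
        | zero =>
          rw [Ln_zero, sum_termL_left]
          refine Wins.wait p hs (fun h hh => ?_)
          have := (IH h hh p true).mp (hw.2 hs rfl h hh)
          rwa [hA, Ln_zero, sum_termL_left] at this
        | succ m =>
          rw [Ln_succ, wins_false_sum_opts]
          constructor
          · intro g hg
            rcases mem_LnList.mp hg with ⟨j, hj, rfl⟩
            exact hw.1 (Ln j) (List.mem_map_of_mem (f := Ln) (mexList_lt_mem (by omega)))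
          · rintro hs' heq h hh
            obtain rfl : hs = hs' := by injection heq
            have := (IH h hh p true).mp (hw.2 hs rfl h hh)
            rwa [hA, Ln_succ] at this
    · -- backward
      intro hw
      cases b with
      | true =>
        rw [wins_true_sum_opts]
        cases hA : mexList as with
        | zero =>
          rw [hA, Ln_zero, sum_termL_left, wins_true_opts] at hw
          rcases hw with ⟨h, hh, hwh⟩
          have : Wins p false (sum (Ln (mexList as)) h) := by
            rw [hA, Ln_zero, sum_termL_left]; exact hwh
          exact Or.inr ⟨hs, rfl, h, hh, (IH h hh p false).mpr this⟩
        | succ m =>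
          rw [hA, Ln_succ, wins_true_sum_opts] at hw
          rcases hw with ⟨g, hg, hwg⟩ | ⟨hs', heq, h, hh, hwh⟩
          · rcases mem_LnList.mp hg with ⟨j, hj, rfl⟩
            exact Or.inl ⟨Ln j, List.mem_map_of_mem (f := Ln) (mexList_lt_mem (by omega)), hwg⟩
          · cases heq
            refine Or.inr ⟨hs, rfl, h, hh, (IH h hh p false).mpr ?_⟩
            rw [hA, Ln_succ]; exact hwh
      | false =>
        rw [wins_false_sum_opts]
        constructor
        · intro g hg
          rcases List.mem_map.mp hg with ⟨i, hias, rfl⟩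
          have hine : i ≠ mexList as := fun h => mexList_not_mem as (h ▸ hias)
          rcases Nat.lt_or_ge i (mexList as) with hilt | hige
          · obtain ⟨m, hm⟩ : ∃ m, mexList as = m + 1 := ⟨mexList as - 1, by omega⟩
            rw [hm, Ln_succ, wins_false_sum_opts] at hw
            exact hw.1 (Ln i) (mem_LnList.mpr ⟨i, by omega, rfl⟩)
          · have higt : mexList as < i := lt_of_le_of_ne hige (Ne.symm hine)
            obtain ⟨k, rfl⟩ : ∃ k, i = k + 1 := ⟨i - 1, by omega⟩
            rw [Ln_succ, wins_true_sum_opts]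
            exact Or.inl ⟨Ln (mexList as), mem_LnList.mpr ⟨mexList as, by omega, rfl⟩, hw⟩
        · rintro hs' heq h hh
          obtain rfl : hs = hs' := by injection heq
          refine (IH h hh p true).mpr ?_
          cases hA : mexList as with
          | zero =>
            rw [hA, Ln_zero, sum_termL_left] at hw
            rw [Ln_zero, sum_termL_left]
            exact (wins_false_opts p hs).mp hw h hh
          | succ m =>
            rw [hA, Ln_succ, wins_false_sum_opts] at hw
            rw [Ln_succ]
            exact hw.2 hs rfl h hh
  | hL =>
    intro p b
    constructor
    · intro hw
      cases hA : mexList as with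
      | zero =>
        rw [Ln_zero, sum_termL_left]
        rcases List.exists_mem_of_ne_nil as has with ⟨i, hias⟩
        cases b with
        | true =>
          rw [wins_true_sum_opts] at hw
          rcases hw with ⟨g, hg, hwg⟩ | ⟨hs', heq, -⟩
          · rcases List.mem_map.mp hg with ⟨j, hjas, rfl⟩
            cases p with
            | left => exact Wins.termL true
            | right => exact absurd hwg (not_wins_Ln_termL j false)
          · exact Pos.noConfusion heq
        | false =>
          rw [wins_false_sum_opts] at hw
          cases p with
          | left => exact Wins.termL false
          | right =>
            exact absurd (hw.1 (Ln i) (List.mem_map_of_mem (f := Ln) hias)) (not_wins_Ln_termL i true)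
      | succ m =>
        rw [Ln_succ]
        cases b with
        | true =>
          rw [wins_true_sum_opts] at hw ⊢
          rcases hw with ⟨g, hg, hwg⟩ | ⟨hs', heq, -⟩
          · rcases List.mem_map.mp hg with ⟨i, hias, rfl⟩
            have hine : i ≠ mexList as := fun h => mexList_not_mem as (h ▸ hias)
            rcases Nat.lt_or_ge i (mexList as) with hilt | hige
            · exact Or.inl ⟨Ln i, mem_LnList.mpr ⟨i, by omega, rfl⟩, hwg⟩
            · have higt : mexList as < i := lt_of_le_of_ne hige (Ne.symm hine)
              obtain ⟨k, rfl⟩ : ∃ k, i = k + 1 := ⟨i - 1, by omega⟩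
              rw [Ln_succ, wins_false_sum_opts] at hwg
              have := hwg.1 (Ln (mexList as)) (mem_LnList.mpr ⟨mexList as, by omega, rfl⟩)
              rwa [hA, Ln_succ, wins_true_sum_opts] at this
          · exact Pos.noConfusion heq
        | false =>
          rw [wins_false_sum_opts] at hw ⊢
          refine ⟨?_, by simp⟩
          intro g hg
          rcases mem_LnList.mp hg with ⟨j, hj, rfl⟩
          exact hw.1 (Ln j) (List.mem_map_of_mem (f := Ln) (mexList_lt_mem (by omega)))
    · intro hw
      cases b with
      | true =>
        rw [wins_true_sum_opts]
        cases hA : mexList as with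
        | zero =>
          rw [hA, Ln_zero, sum_termL_left, wins_termL] at hw
          subst hw
          rcases List.exists_mem_of_ne_nil as has with ⟨i, hias⟩
          exact Or.inl ⟨Ln i, List.mem_map_of_mem (f := Ln) hias, wins_Ln_termL i false⟩
        | succ m =>
          rw [hA, Ln_succ, wins_true_sum_opts] at hw
          rcases hw with ⟨g, hg, hwg⟩ | ⟨hs', heq, -⟩
          · rcases mem_LnList.mp hg with ⟨j, hj, rfl⟩
            exact Or.inl ⟨Ln j, List.mem_map_of_mem (f := Ln) (mexList_lt_mem (by omega)), hwg⟩
          · exact Pos.noConfusion heq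
      | false =>
        rw [wins_false_sum_opts]
        refine ⟨?_, by simp⟩
        intro g hg
        rcases List.mem_map.mp hg with ⟨i, hias, rfl⟩
        have hine : i ≠ mexList as := fun h => mexList_not_mem as (h ▸ hias)
        rcases Nat.lt_or_ge i (mexList as) with hilt | hige
        · obtain ⟨m, hm⟩ : ∃ m, mexList as = m + 1 := ⟨mexList as - 1, by omega⟩
          rw [hm, Ln_succ, wins_false_sum_opts] at hw
          exact hw.1 (Ln i) (mem_LnList.mpr ⟨i, by omega, rfl⟩)
        · have higt : mexList as < i := lt_of_le_of_ne hige (Ne.symm hine)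
          obtain ⟨k, rfl⟩ : ∃ k, i = k + 1 := ⟨i - 1, by omega⟩
          rw [Ln_succ, wins_true_sum_opts]
          exact Or.inl ⟨Ln (mexList as), mem_LnList.mpr ⟨mexList as, by omega, rfl⟩, hw⟩
  | hR =>
    intro p b
    constructor
    · intro hw
      cases hA : mexList as with
      | zero =>
        rw [Ln_zero, sum_termL_left]
        rcases List.exists_mem_of_ne_nil as has with ⟨i, hias⟩
        cases b with
        | true =>
          rw [wins_true_sum_opts] at hw
          rcases hw with ⟨g, hg, hwg⟩ | ⟨hs', heq, -⟩
          · rcases List.mem_map.mp hg with ⟨j, hjas, rfl⟩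
            cases p with
            | right => exact Wins.termR true
            | left => exact absurd hwg (not_wins_Ln_termR j false)
          · exact Pos.noConfusion heq
        | false =>
          rw [wins_false_sum_opts] at hw
          cases p with
          | right => exact Wins.termR false
          | left =>
            exact absurd (hw.1 (Ln i) (List.mem_map_of_mem (f := Ln) hias)) (not_wins_Ln_termR i true)
      | succ m =>
        rw [Ln_succ]
        cases b with
        | true =>
          rw [wins_true_sum_opts] at hw ⊢
          rcases hw with ⟨g, hg, hwg⟩ | ⟨hs', heq, -⟩
          · rcases List.mem_map.mp hg with ⟨i, hias, rfl⟩
            have hine : i ≠ mexList as := fun h => mexList_not_mem as (h ▸ hias)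
            rcases Nat.lt_or_ge i (mexList as) with hilt | hige
            · exact Or.inl ⟨Ln i, mem_LnList.mpr ⟨i, by omega, rfl⟩, hwg⟩
            · have higt : mexList as < i := lt_of_le_of_ne hige (Ne.symm hine)
              obtain ⟨k, rfl⟩ : ∃ k, i = k + 1 := ⟨i - 1, by omega⟩
              rw [Ln_succ, wins_false_sum_opts] at hwg
              have := hwg.1 (Ln (mexList as)) (mem_LnList.mpr ⟨mexList as, by omega, rfl⟩)
              rwa [hA, Ln_succ, wins_true_sum_opts] at this
          · exact Pos.noConfusion heq
        | false =>
          rw [wins_false_sum_opts] at hw ⊢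
          refine ⟨?_, by simp⟩
          intro g hg
          rcases mem_LnList.mp hg with ⟨j, hj, rfl⟩
          exact hw.1 (Ln j) (List.mem_map_of_mem (f := Ln) (mexList_lt_mem (by omega)))
    · intro hw
      cases b with
      | true =>
        rw [wins_true_sum_opts]
        cases hA : mexList as with
        | zero =>
          rw [hA, Ln_zero, sum_termL_left, wins_termR] at hw
          subst hw
          rcases List.exists_mem_of_ne_nil as has with ⟨i, hias⟩
          exact Or.inl ⟨Ln i, List.mem_map_of_mem (f := Ln) hias, wins_Ln_termR i false⟩
        | succ m =>
          rw [hA, Ln_succ, wins_true_sum_opts] at hw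
          rcases hw with ⟨g, hg, hwg⟩ | ⟨hs', heq, -⟩
          · rcases mem_LnList.mp hg with ⟨j, hj, rfl⟩
            exact Or.inl ⟨Ln j, List.mem_map_of_mem (f := Ln) (mexList_lt_mem (by omega)), hwg⟩
          · exact Pos.noConfusion heq
      | false =>
        rw [wins_false_sum_opts]
        refine ⟨?_, by simp⟩
        intro g hg
        rcases List.mem_map.mp hg with ⟨i, hias, rfl⟩
        have hine : i ≠ mexList as := fun h => mexList_not_mem as (h ▸ hias)
        rcases Nat.lt_or_ge i (mexList as) with hilt | hige
        · obtain ⟨m, hm⟩ : ∃ m, mexList as = m + 1 := ⟨mexList as - 1, by omega⟩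
          rw [hm, Ln_succ, wins_false_sum_opts] at hw
          exact hw.1 (Ln i) (mem_LnList.mpr ⟨i, by omega, rfl⟩)
        · have higt : mexList as < i := lt_of_le_of_ne hige (Ne.symm hine)
          obtain ⟨k, rfl⟩ : ∃ k, i = k + 1 := ⟨i - 1, by omega⟩
          rw [Ln_succ, wins_true_sum_opts]
          exact Or.inl ⟨Ln (mexList as), mem_LnList.mpr ⟨mexList as, by omega, rfl⟩, hw⟩

end Pos
/-- if `G = {*L_{a_1}, ..., *L_{a_ℓ}}` and `a = mex{a_1,...,a_ℓ}`,
then `G ≡ *L_a`. -/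
theorem opts_Ln_equiv_Ln_mex (as : List ℕ) (h : as ≠ []) :
    Pos.equiv (Pos.opts (as.map Pos.Ln)) (Pos.Ln (Pos.mexList as)) := by
  intro X _
  have h1 := Pos.main_lemma as h X Pos.Player.left true
  have h2 := Pos.main_lemma as h X Pos.Player.left false
  simp only [Pos.outcome, h1, h2]
  split_ifs <;> tauto
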